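/- Let η : [0,1] → [0,∞) be measurable and preconfined (η(x) < 2 for all x), and let β_t = Σ_{s=0}^{t-1} r(U^s η). Define ν(A) = Σ_{m∈ℤ} Leb{x : m - η(x) ∈ A} and f(y) = β_1 + ν(0,y] for y ≥ 0. Then β_{t+1} = f(β_t) for all t ≥ 0; in particular β_t = f^t(0). -/

import Mathlib

open MeasureTheory
open scoped ENNReal

/-- The fraction of unstable sites of a generalized chip configuration `η : [0,1] → [0,∞)`. -/
noncomputable def genR (η : ℝ → ℝ) : ℝ :=
  (volume {x ∈ Set.Icc (0:ℝ) 1 | 1 ≤ η x}).toReal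

/-- The parallel update rule for generalized chip configurations. -/
noncomputable def genU (η : ℝ → ℝ) : ℝ → ℝ :=
  fun x => η x + genR η - if 1 ≤ η x then 1 else 0

/-- The measure ν(0,y] = ∑_{m ∈ ℤ} Leb{x ∈ [0,1] : m - η(x) ∈ (0,y]}. -/
noncomputable def genNu (η : ℝ → ℝ) (y : ℝ) : ℝ :=
  ∑' m : ℤ, (volume {x ∈ Set.Icc (0:ℝ) 1 | (m : ℝ) - η x ∈ Set.Ioc 0 y}).toReal

lemma vol_sep_le_one (p : ℝ → Prop) : volume {x ∈ Set.Icc (0:ℝ) 1 | p x} ≤ 1 := by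
  calc volume {x ∈ Set.Icc (0:ℝ) 1 | p x} ≤ volume (Set.Icc (0:ℝ) 1) :=
        measure_mono (Set.sep_subset _ _)
    _ = 1 := by simp [Real.volume_Icc]

lemma vol_sep_ne_top (p : ℝ → Prop) : volume {x ∈ Set.Icc (0:ℝ) 1 | p x} ≠ ⊤ :=
  ne_of_lt (lt_of_le_of_lt (vol_sep_le_one p) (by norm_num))

lemma genR_nonneg (η : ℝ → ℝ) : 0 ≤ genR η := ENNReal.toReal_nonneg

lemma genR_le_one (η : ℝ → ℝ) : genR η ≤ 1 := by
  have h := ENNReal.toReal_mono (by norm_num) (vol_sep_le_one (fun x => 1 ≤ η x))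
  simpa [genR] using h

lemma floor_step {a r : ℝ} (hr0 : 0 ≤ r) (hr1 : r ≤ 1) :
    (if (⌊a⌋ : ℝ) + 1 ≤ a + r then (1:ℤ) else 0) = ⌊a + r⌋ - ⌊a⌋ := by
  have hmono : ⌊a⌋ ≤ ⌊a + r⌋ := Int.floor_le_floor (by linarith)
  split_ifs with h
  · have h1 : ⌊a⌋ + 1 ≤ ⌊a + r⌋ := Int.le_floor.mpr (by push_cast; linarith)
    have h2 : ⌊a + r⌋ < ⌊a⌋ + 2 := Int.floor_lt.mpr (by
      have := Int.lt_floor_add_one a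
      push_cast; linarith)
    omega
  · push_neg at h
    have h2 : ⌊a + r⌋ < ⌊a⌋ + 1 := Int.floor_lt.mpr (by push_cast; linarith)
    omega

theorem beta_recurrence (η : ℝ → ℝ) (hmeas : Measurable η)
    (hpre : ∀ x ∈ Set.Icc (0:ℝ) 1, 0 ≤ η x ∧ η x < 2)
    (β : ℕ → ℝ) (hβ : ∀ t, β t = ∑ s ∈ Finset.range t, genR (genU^[s] η))
    (f : ℝ → ℝ) (hf : ∀ y : ℝ, 0 ≤ y → f y = β 1 + genNu η y) :
    ∀ t : ℕ, β (t + 1) = f (β t) ∧ β t = f^[t] 0 := by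
  have hβ0 : β 0 = 0 := by simp [hβ]
  have hstep : ∀ s, β (s+1) = β s + genR (genU^[s] η) := by
    intro s; simp [hβ, Finset.sum_range_succ]
  have hβnonneg : ∀ t, 0 ≤ β t := by
    intro t; rw [hβ]; exact Finset.sum_nonneg fun s _ => genR_nonneg _
  have hβ1 : β 1 = genR η := by rw [hstep 0, hβ0]; simp
  -- key formula for the iterates on [0,1]
  have key : ∀ s, ∀ x ∈ Set.Icc (0:ℝ) 1,
      genU^[s+1] η x = η x + β (s+1) - (⌊η x + β s⌋ : ℝ) := by
    intro s
    induction s with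
    | zero =>
      intro x hx
      obtain ⟨h0, h2⟩ := hpre x hx
      have hfloor : ((⌊η x + β 0⌋ : ℤ) : ℝ) = if 1 ≤ η x then 1 else 0 := by
        rw [hβ0, add_zero]
        split_ifs with h
        · have : ⌊η x⌋ = 1 := by
            rw [Int.floor_eq_iff]
            constructor
            · exact_mod_cast h
            · push_cast; linarith
          rw [this]; norm_num
        · push_neg at h
          have : ⌊η x⌋ = 0 := by
            rw [Int.floor_eq_iff]
            constructor
            · exact_mod_cast h0
            · push_cast; linarith
          rw [this]; norm_num
      rw [Function.iterate_one]
      show η x + genR η - (if 1 ≤ η x then 1 else 0) = η x + β (0+1) - (⌊η x + β 0⌋ : ℝ)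
      rw [hfloor, hstep 0, hβ0]
      simp only [Function.iterate_zero, id_eq]
      ring
    | succ s ih =>
      intro x hx
      rw [Function.iterate_succ_apply']
      have hr'0 : (0:ℝ) ≤ genR (genU^[s] η) := genR_nonneg _
      have hr'1 : genR (genU^[s] η) ≤ 1 := genR_le_one _
      have harr : η x + β s + genR (genU^[s] η) = η x + β (s+1) := by rw [hstep s]; ring
      have hfs := floor_step (a := η x + β s) hr'0 hr'1
      rw [harr] at hfs
      have hcond : (1 ≤ genU^[s+1] η x) ↔ ((⌊η x + β s⌋ : ℝ) + 1 ≤ η x + β (s+1)) := by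
        rw [ih x hx]; constructor <;> intro h <;> linarith
      have hite : (if 1 ≤ genU^[s+1] η x then (1:ℝ) else 0)
          = (⌊η x + β (s+1)⌋ : ℝ) - (⌊η x + β s⌋ : ℝ) := by
        rw [if_congr hcond rfl rfl]
        split_ifs at hfs ⊢ with h
        · exact_mod_cast hfs
        · exact_mod_cast hfs
      show genU^[s+1] η x + genR (genU^[s+1] η) - (if 1 ≤ genU^[s+1] η x then 1 else 0)
          = η x + β (s+1+1) - (⌊η x + β (s+1)⌋ : ℝ)
      rw [hite, ih x hx, hstep (s+1)]
      ring
  -- the main recurrence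
  have main : ∀ t, β (t+1) = β 1 + genNu η (β t) := by
    intro t
    set As : ℕ → Set ℝ :=
      fun s => {x ∈ Set.Icc (0:ℝ) 1 | (⌊η x + β s⌋ : ℝ) + 1 ≤ η x + β (s+1)} with hAs
    set Bm : ℤ → Set ℝ :=
      fun m => {x ∈ Set.Icc (0:ℝ) 1 | (m : ℝ) - η x ∈ Set.Ioc 0 (β t)} with hBm
    have hmeasFloor : ∀ s : ℕ, Measurable fun x => ((⌊η x + β s⌋ : ℤ) : ℝ) := by
      intro s
      exact measurable_from_top.comp ((hmeas.add_const _).floor)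
    have hAmeas : ∀ s, MeasurableSet (As s) := by
      intro s
      have : As s = Set.Icc (0:ℝ) 1 ∩ {x | (⌊η x + β s⌋ : ℝ) + 1 ≤ η x + β (s+1)} := rfl
      rw [this]
      exact measurableSet_Icc.inter
        (measurableSet_le ((hmeasFloor s).add_const 1) (hmeas.add_const _))
    have hBmeas : ∀ m : ℤ, MeasurableSet (Bm m) := by
      intro m
      have : Bm m = Set.Icc (0:ℝ) 1 ∩ (fun x => (m:ℝ) - η x) ⁻¹' Set.Ioc 0 (β t) := rfl
      rw [this]
      exact measurableSet_Icc.inter ((measurable_const.sub hmeas) measurableSet_Ioc)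
    -- pointwise identity
    have hpoint : ∀ x, (∑ s ∈ Finset.range t, (As s).indicator (1 : ℝ → ℝ≥0∞) x)
        = ∑' m : ℤ, (Bm m).indicator (1 : ℝ → ℝ≥0∞) x := by
      intro x
      by_cases hx : x ∈ Set.Icc (0:ℝ) 1
      · have hA : ∀ s : ℕ, (As s).indicator (1 : ℝ → ℝ≥0∞) x
            = (((⌊η x + β (s+1)⌋ - ⌊η x + β s⌋).toNat : ℕ) : ℝ≥0∞) := by
          intro s
          have hr'0 : (0:ℝ) ≤ genR (genU^[s] η) := genR_nonneg _
          have hr'1 : genR (genU^[s] η) ≤ 1 := genR_le_one _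
          have harr : η x + β s + genR (genU^[s] η) = η x + β (s+1) := by rw [hstep s]; ring
          have hfs := floor_step (a := η x + β s) hr'0 hr'1
          rw [harr] at hfs
          by_cases h : (⌊η x + β s⌋ : ℝ) + 1 ≤ η x + β (s+1)
          · rw [Set.indicator_of_mem (show x ∈ As s from ⟨hx, h⟩)]
            rw [if_pos h] at hfs
            rw [← hfs]
            norm_num
          · rw [Set.indicator_of_notMem (fun hmem => h hmem.2)]
            rw [if_neg h] at hfs
            rw [← hfs]
            norm_num
        have hmonon : ∀ s, ⌊η x + β s⌋ ≤ ⌊η x + β (s+1)⌋ := by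
          intro s
          refine Int.floor_le_floor ?_
          have := genR_nonneg (genU^[s] η)
          have := hstep s
          linarith
        have hsumNat : ∑ s ∈ Finset.range t, (⌊η x + β (s+1)⌋ - ⌊η x + β s⌋).toNat
            = (⌊η x + β t⌋ - ⌊η x + β 0⌋).toNat := by
          have hcast : (((∑ s ∈ Finset.range t, (⌊η x + β (s+1)⌋ - ⌊η x + β s⌋).toNat) : ℕ) : ℤ)
              = ⌊η x + β t⌋ - ⌊η x + β 0⌋ := by
            rw [Nat.cast_sum]
            rw [Finset.sum_congr rfl
              (fun s _ => Int.toNat_of_nonneg (by have := hmonon s; omega))]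
            exact Finset.sum_range_sub (fun s => ⌊η x + β s⌋) t
          omega
        have hB : ∀ m : ℤ, (Bm m).indicator (1 : ℝ → ℝ≥0∞) x
            = if m ∈ Finset.Ioc ⌊η x + β 0⌋ ⌊η x + β t⌋ then 1 else 0 := by
          intro m
          have hmem : x ∈ Bm m ↔ m ∈ Finset.Ioc ⌊η x + β 0⌋ ⌊η x + β t⌋ := by
            simp only [hBm, Set.mem_sep_iff, Set.mem_Ioc, Finset.mem_Ioc, hβ0, add_zero]
            constructor
            · rintro ⟨-, h1, h2⟩
              exact ⟨Int.floor_lt.mpr (by linarith), Int.le_floor.mpr (by linarith)⟩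
            · rintro ⟨h1, h2⟩
              have h1' := Int.floor_lt.mp h1
              have h2' := Int.le_floor.mp h2
              exact ⟨hx, by linarith, by linarith⟩
          by_cases h : x ∈ Bm m
          · rw [Set.indicator_of_mem h, if_pos (hmem.mp h)]
            rfl
          · rw [Set.indicator_of_notMem h, if_neg (fun hm => h (hmem.mpr hm))]
        calc ∑ s ∈ Finset.range t, (As s).indicator (1 : ℝ → ℝ≥0∞) x
            = ∑ s ∈ Finset.range t,
                (((⌊η x + β (s+1)⌋ - ⌊η x + β s⌋).toNat : ℕ) : ℝ≥0∞) :=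
              Finset.sum_congr rfl (fun s _ => hA s)
          _ = (((∑ s ∈ Finset.range t, (⌊η x + β (s+1)⌋ - ⌊η x + β s⌋).toNat : ℕ)) : ℝ≥0∞) :=
              (Nat.cast_sum _ _).symm
          _ = (((⌊η x + β t⌋ - ⌊η x + β 0⌋).toNat : ℕ) : ℝ≥0∞) := by rw [hsumNat]
          _ = ((Finset.Ioc ⌊η x + β 0⌋ ⌊η x + β t⌋).card : ℝ≥0∞) := by rw [Int.card_Ioc]
          _ = ∑ m ∈ Finset.Ioc ⌊η x + β 0⌋ ⌊η x + β t⌋, (1 : ℝ≥0∞) := by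
              rw [Finset.sum_const, nsmul_eq_mul, mul_one]
          _ = ∑ m ∈ Finset.Ioc ⌊η x + β 0⌋ ⌊η x + β t⌋,
                (if m ∈ Finset.Ioc ⌊η x + β 0⌋ ⌊η x + β t⌋ then (1:ℝ≥0∞) else 0) :=
              Finset.sum_congr rfl (fun m hm => (if_pos hm).symm)
          _ = ∑' m : ℤ, (if m ∈ Finset.Ioc ⌊η x + β 0⌋ ⌊η x + β t⌋ then (1:ℝ≥0∞) else 0) :=
              (tsum_eq_sum (fun m hm => if_neg hm)).symm
          _ = ∑' m : ℤ, (Bm m).indicator (1 : ℝ → ℝ≥0∞) x :=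
              tsum_congr (fun m => (hB m).symm)
      · have h1 : ∀ s : ℕ, (As s).indicator (1 : ℝ → ℝ≥0∞) x = 0 :=
          fun s => Set.indicator_of_notMem (fun h => hx h.1) _
        have h2 : ∀ m : ℤ, (Bm m).indicator (1 : ℝ → ℝ≥0∞) x = 0 :=
          fun m => Set.indicator_of_notMem (fun h => hx h.1) _
        simp [h1, h2]
    -- swap sums via lintegral
    have hswap : ∑ s ∈ Finset.range t, volume (As s) = ∑' m : ℤ, volume (Bm m) := by
      calc ∑ s ∈ Finset.range t, volume (As s)
          = ∑ s ∈ Finset.range t, ∫⁻ x, (As s).indicator (1 : ℝ → ℝ≥0∞) x := by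
            refine Finset.sum_congr rfl fun s _ => ?_
            rw [lintegral_indicator (hAmeas s)]
            simp only [Pi.one_apply]
            rw [setLIntegral_one]
        _ = ∫⁻ x, ∑ s ∈ Finset.range t, (As s).indicator (1 : ℝ → ℝ≥0∞) x :=
            (lintegral_finset_sum _ (fun s _ => measurable_one.indicator (hAmeas s))).symm
        _ = ∫⁻ x, ∑' m : ℤ, (Bm m).indicator (1 : ℝ → ℝ≥0∞) x := lintegral_congr hpoint
        _ = ∑' m : ℤ, ∫⁻ x, (Bm m).indicator (1 : ℝ → ℝ≥0∞) x :=
            lintegral_tsum (fun m => (measurable_one.indicator (hBmeas m)).aemeasurable)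
        _ = ∑' m : ℤ, volume (Bm m) := by
            refine tsum_congr fun m => ?_
            rw [lintegral_indicator (hBmeas m)]
            simp only [Pi.one_apply]
            rw [setLIntegral_one]
    -- identify genR of the iterates with volumes of As
    have hAeq : ∀ s : ℕ, genR (genU^[s+1] η) = (volume (As s)).toReal := by
      intro s
      have : {x ∈ Set.Icc (0:ℝ) 1 | 1 ≤ genU^[s+1] η x} = As s := by
        ext x
        simp only [hAs, Set.mem_sep_iff]
        constructor
        · rintro ⟨hx, h⟩
          rw [key s x hx] at h
          exact ⟨hx, by linarith⟩
        · rintro ⟨hx, h⟩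
          refine ⟨hx, ?_⟩
          rw [key s x hx]
          linarith
      rw [genR, this]
    have hAfin : ∀ s : ℕ, volume (As s) ≠ ⊤ := fun s => vol_sep_ne_top _
    have hBfin : ∀ m : ℤ, volume (Bm m) ≠ ⊤ := fun m => vol_sep_ne_top _
    calc β (t+1) = ∑ s ∈ Finset.range t, genR (genU^[s+1] η) + genR (genU^[0] η) := by
          rw [hβ (t+1), Finset.sum_range_succ']
      _ = β 1 + ∑ s ∈ Finset.range t, (volume (As s)).toReal := by
          rw [Finset.sum_congr rfl (fun s _ => hAeq s)]
          simp [hβ1]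
          ring
      _ = β 1 + (∑ s ∈ Finset.range t, volume (As s)).toReal := by
          rw [ENNReal.toReal_sum (fun s _ => hAfin s)]
      _ = β 1 + (∑' m : ℤ, volume (Bm m)).toReal := by rw [hswap]
      _ = β 1 + genNu η (β t) := by
          rw [genNu, ENNReal.tsum_toReal_eq hBfin]
  have hiter : ∀ t, β t = f^[t] 0 := by
    intro t
    induction t with
    | zero => simpa using hβ0
    | succ n ih =>
      rw [Function.iterate_succ_apply', ← ih, main n, hf (β n) (hβnonneg n)]
  intro t
  exact ⟨(main t).trans (hf (β t) (hβnonneg t)).symm, hiter t⟩
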